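/- arXiv:1404.1898 — 2 statements merged into one kernel-verified Lean document; each statement's English description precedes it below -/
import Mathlib

section
/- Let a and b be positive integers, d = a + b, and let P = C·X^a(X−1)^b ∈ ℂ[X] with C ∈ ℂ such that P(a/d) = 1. Then the polynomial P − 1 has a root of multiplicity exactly 2 at z = a/d, all of its other complex roots are simple, and it has exactly d − 1 distinct complex roots. -/
open Polynomial in
lemma sb_deriv (a b : ℕ) (c : ℂ) :
    derivative (C c * (X^(a+1) * (X-1)^(b+1)) - 1) =
      C c * (X^a * (X-1)^b * (C ((a:ℂ)+b+2) * X - C ((a:ℂ)+1))) := by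
  simp only [derivative_sub, derivative_one, sub_zero, derivative_mul, derivative_C,
    derivative_pow, derivative_X, Nat.cast_add, Nat.cast_one, Nat.add_sub_cancel, map_add,
    map_one, mul_one, zero_mul, zero_add, map_ofNat]
  ring

open Polynomial in
lemma sb_rm (Q : Polynomial ℂ) (hQ : Q ≠ 0) (z : ℂ) (hz : Q.IsRoot z) :
    rootMultiplicity z Q = rootMultiplicity z (derivative Q) + 1 := by
  have h1 : 0 < rootMultiplicity z Q := (rootMultiplicity_pos hQ).2 hz
  have h2 := derivative_rootMultiplicity_of_root_of_mem_nonZeroDivisors hz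
    (mem_nonZeroDivisors_of_ne_zero (by exact_mod_cast h1.ne'))
  omega

/-- Let `a`, `b` be positive integers, `d = a + b`, and `P = C·X^a (X-1)^b ∈ ℂ[X]` with
`P(a/d) = 1`.  Then `P - 1` has a root of multiplicity exactly `2` at `a/d`, all of its
other complex roots are simple, and it has exactly `d - 1` distinct complex roots. -/
theorem simple_branching_over_one
    (a b : ℕ) (ha : 0 < a) (hb : 0 < b) (d : ℕ) (hd : d = a + b)
    (C : ℂ) (P : Polynomial ℂ)
    (hP : P = Polynomial.C C * (Polynomial.X ^ a * (Polynomial.X - 1) ^ b))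
    (hval : P.eval ((a : ℂ) / (d : ℂ)) = 1) :
    Polynomial.rootMultiplicity ((a : ℂ) / (d : ℂ)) (P - 1) = 2 ∧
    (∀ z : ℂ, (P - 1).eval z = 0 → z ≠ (a : ℂ) / (d : ℂ) →
      Polynomial.rootMultiplicity z (P - 1) = 1) ∧
    (P - 1).roots.toFinset.card = d - 1 := by
  obtain ⟨a, rfl⟩ := Nat.exists_eq_succ_of_ne_zero ha.ne'
  obtain ⟨b, rfl⟩ := Nat.exists_eq_succ_of_ne_zero hb.ne'
  subst hd hP
  set α : ℂ := ((a+1 : ℕ) : ℂ) with hα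
  set e : ℂ := ((a+1+(b+1) : ℕ) : ℂ) with he
  have heα : e = (a:ℂ) + b + 2 := by rw [he]; push_cast; ring
  have hαa : α = (a:ℂ) + 1 := by rw [hα]; push_cast; ring
  have he0 : e ≠ 0 := by
    rw [heα]
    have : (0:ℝ) < (a:ℝ) + b + 2 := by positivity
    intro h
    have := congrArg Complex.re h
    push_cast at this
    simp at this
    norm_cast at this
  set z0 : ℂ := α / e with hz0
  set Q : Polynomial ℂ := Polynomial.C C * (Polynomial.X ^ (a+1) * (Polynomial.X - 1) ^ (b+1)) - 1 with hQ
  -- evaluation facts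
  have hvalz : Q.eval z0 = 0 := by rw [hQ]; simp [hval]
  have hval' : C * (z0 ^ (a+1) * (z0 - 1) ^ (b+1)) = 1 := by
    simpa [hQ, sub_eq_zero] using hvalz
  have hc0 : C ≠ 0 := by rintro rfl; simp at hval'
  have hz00 : z0 ≠ 0 := by intro h; rw [h] at hval'; simp [zero_pow] at hval'
  have hz01 : z0 ≠ 1 := by intro h; rw [h] at hval'; simp [zero_pow] at hval'
  have hQ0 : Q ≠ 0 := by
    intro h
    have := congrArg (Polynomial.eval (0:ℂ)) h
    simp [hQ, zero_pow] at this
  -- derivative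
  have hD : Polynomial.derivative Q =
      Polynomial.C C * (Polynomial.X ^ a * (Polynomial.X - 1) ^ b *
        (Polynomial.C e * Polynomial.X - Polynomial.C α)) := by
    rw [hQ, sb_deriv, heα, hαa]
  -- multiplicity at z0
  have hCeCz0 : Polynomial.C e * Polynomial.C z0 = Polynomial.C α := by
    rw [← map_mul, hz0, mul_div_cancel₀ _ he0]
  have hD2 : Polynomial.derivative Q =
      (Polynomial.C C * (Polynomial.X ^ a * (Polynomial.X - 1) ^ b) * Polynomial.C e) *
        (Polynomial.X - Polynomial.C z0) := by
    rw [hD, ← hCeCz0]; ring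
  have hEeval : Polynomial.eval z0
      (Polynomial.C C * (Polynomial.X ^ a * (Polynomial.X - 1) ^ b) * Polynomial.C e) ≠ 0 := by
    simp only [Polynomial.eval_mul, Polynomial.eval_C, Polynomial.eval_pow, Polynomial.eval_sub,
      Polynomial.eval_X, Polynomial.eval_one]
    exact mul_ne_zero (mul_ne_zero hc0 (mul_ne_zero (pow_ne_zero _ hz00)
      (pow_ne_zero _ (sub_ne_zero.mpr hz01)))) he0
  have hE0 : (Polynomial.C C * (Polynomial.X ^ a * (Polynomial.X - 1) ^ b) * Polynomial.C e) ≠ 0 := by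
    intro h; rw [h] at hEeval; simp at hEeval
  have hrmz0 : Polynomial.rootMultiplicity z0 Q = 2 := by
    rw [sb_rm Q hQ0 z0 hvalz, hD2, Polynomial.rootMultiplicity_mul
      (mul_ne_zero hE0 (Polynomial.X_sub_C_ne_zero z0)),
      Polynomial.rootMultiplicity_eq_zero (by simpa using hEeval),
      Polynomial.rootMultiplicity_X_sub_C_self]
  -- other roots simple
  have hsimple : ∀ z : ℂ, Q.eval z = 0 → z ≠ z0 → Polynomial.rootMultiplicity z Q = 1 := by
    intro z hz hzne
    have hz' : C * (z ^ (a+1) * (z - 1) ^ (b+1)) = 1 := by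
      have := hz; rw [hQ] at this; simp only [Polynomial.eval_sub, Polynomial.eval_mul,
        Polynomial.eval_pow, Polynomial.eval_C, Polynomial.eval_X, Polynomial.eval_one] at this
      linear_combination this
    have hzz0 : z ≠ 0 := by rintro rfl; simp [zero_pow] at hz'
    have hzz1 : z ≠ 1 := by rintro rfl; simp [zero_pow] at hz'
    have hlin : e * z - α ≠ 0 := by
      intro h
      apply hzne
      rw [hz0, eq_div_iff he0]
      linear_combination h
    have hDev : (Polynomial.derivative Q).eval z ≠ 0 := by
      rw [hD]
      simp only [Polynomial.eval_mul, Polynomial.eval_C, Polynomial.eval_pow, Polynomial.eval_sub,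
        Polynomial.eval_X, Polynomial.eval_one]
      exact mul_ne_zero hc0 (mul_ne_zero (mul_ne_zero (pow_ne_zero _ hzz0)
        (pow_ne_zero _ (sub_ne_zero.mpr hzz1))) hlin)
    rw [sb_rm Q hQ0 z hz, Polynomial.rootMultiplicity_eq_zero hDev]
  -- degree and root count
  have hdeg : Q.natDegree = a+1+(b+1) := by
    rw [hQ]
    compute_degree!
  have hcard : Q.roots.card = a+1+(b+1) := by
    rw [← hdeg]
    exact (Polynomial.splits_iff_card_roots.mp (IsAlgClosed.splits Q))
  have hz0mem : z0 ∈ Q.roots.toFinset := by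
    rw [Multiset.mem_toFinset, Polynomial.mem_roots hQ0]
    exact hvalz
  have hsum : ∑ z ∈ Q.roots.toFinset, Q.roots.count z = a+1+(b+1) := by
    rw [Multiset.toFinset_sum_count_eq, hcard]
  rw [← Finset.add_sum_erase _ _ hz0mem] at hsum
  have hcount0 : Q.roots.count z0 = 2 := by rw [Polynomial.count_roots]; exact hrmz0
  have hcount1 : ∀ z ∈ Q.roots.toFinset.erase z0, Q.roots.count z = 1 := by
    intro z hzmem
    obtain ⟨hzne, hzmem⟩ := Finset.mem_erase.mp hzmem
    rw [Polynomial.count_roots]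
    exact hsimple z ((Polynomial.mem_roots hQ0).mp (Multiset.mem_toFinset.mp hzmem)) hzne
  rw [hcount0, Finset.sum_congr rfl hcount1, Finset.sum_const, smul_eq_mul, mul_one,
    Finset.card_erase_of_mem hz0mem] at hsum
  have hcardpos : 0 < Q.roots.toFinset.card := Finset.card_pos.mpr ⟨z0, hz0mem⟩
  refine ⟨hrmz0, hsimple, by omega⟩
end

section
/- Let η : ℝ → ℝ satisfy 0 ≤ η ≤ 1, η(r) = 0 for all r ≤ 1/2, and η(r) = 1 for all r ≥ 1. Define f_X(x,y) = (1 − η(y)) + (η(x) + η(y))·y and f_Y(x,y) = (1 − η(x)) + (η(x) + η(y))·x. Then for all x, y ∈ [0,4) with x·y < 1/4, one has 1/2 < f_X(x,y) < 5 and 1/2 < f_Y(x,y) < 5. -/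
lemma coefficient_bound_aux (η : ℝ → ℝ)
    (h0 : ∀ r : ℝ, 0 ≤ η r) (h1 : ∀ r : ℝ, η r ≤ 1)
    (hlo : ∀ r : ℝ, r ≤ 1 / 2 → η r = 0) (hhi : ∀ r : ℝ, 1 ≤ r → η r = 1)
    (x y : ℝ) (hx0 : 0 ≤ x) (hy0 : 0 ≤ y) (hy4 : y < 4) (hxy : x * y < 1 / 4) :
    1 / 2 < (1 - η y) + (η x + η y) * y ∧ (1 - η y) + (η x + η y) * y < 5 := by
  rcases le_or_gt y (1/2) with hy | hy
  · rw [hlo y hy]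
    have hx1 := h1 x
    have hx0' := h0 x
    constructor
    · nlinarith [mul_nonneg hx0' hy0]
    · nlinarith [mul_nonneg (sub_nonneg.2 hx1) hy0]
  · have hxhalf : x < 1/2 := by nlinarith
    rw [hlo x (le_of_lt hxhalf)]
    have hy1 := h1 y
    have hy0' := h0 y
    constructor
    · rcases le_or_gt 1 y with h | h
      · rw [hhi y h]; nlinarith
      · nlinarith [mul_nonneg (sub_nonneg.2 hy1) (le_of_lt (sub_pos.2 h))]
    · nlinarith [mul_nonneg (sub_nonneg.2 hy1) hy0]

/-- If `η : ℝ → ℝ` is a cutoff with `0 ≤ η ≤ 1`, `η r = 0` for `r ≤ 1/2`, `η r = 1` for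
`r ≥ 1`, and `f_X (x,y) = (1 - η y) + (η x + η y)·y`,
`f_Y (x,y) = (1 - η x) + (η x + η y)·x`, then for all `x, y ∈ [0,4)` with `x y < 1/4`
one has `1/2 < f_X (x,y) < 5` and `1/2 < f_Y (x,y) < 5`. -/
theorem coefficient_function_bounds (η : ℝ → ℝ)
    (h0 : ∀ r : ℝ, 0 ≤ η r) (h1 : ∀ r : ℝ, η r ≤ 1)
    (hlo : ∀ r : ℝ, r ≤ 1 / 2 → η r = 0) (hhi : ∀ r : ℝ, 1 ≤ r → η r = 1)
    (fX fY : ℝ → ℝ → ℝ)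
    (hfX : ∀ x y : ℝ, fX x y = (1 - η y) + (η x + η y) * y)
    (hfY : ∀ x y : ℝ, fY x y = (1 - η x) + (η x + η y) * x) :
    ∀ x y : ℝ, 0 ≤ x → x < 4 → 0 ≤ y → y < 4 → x * y < 1 / 4 →
      (1 / 2 < fX x y ∧ fX x y < 5) ∧ (1 / 2 < fY x y ∧ fY x y < 5) := by
  intro x y hx0 hx4 hy0 hy4 hxy
  have hX := coefficient_bound_aux η h0 h1 hlo hhi x y hx0 hy0 hy4 hxy
  have hY := coefficient_bound_aux η h0 h1 hlo hhi y x hy0 hx0 hx4 (by rw [mul_comm]; exact hxy)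
  rw [hfX, hfY]
  refine ⟨hX, ?_⟩
  have : (1 - η x) + (η x + η y) * x = (1 - η x) + (η y + η x) * x := by ring
  rw [this]
  exact hY
end
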